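/- Let I be a two-sided ideal of a ring R with 1 + I ⊆ R^×, and suppose the upper annihilating sequence of I has finite length d (I_d = I, I_{d−1} ≠ I). If the nilpotency class of Γ = 1 + I is n, then n ≤ d. -/

import Mathlib

/-- The upper annihilating sequence of a set `I` in a ring. -/
def uasSet {R : Type*} [Ring R] (I : Set R) : ℕ → Set R
  | 0 => {0}
  | t + 1 => {a | a ∈ I ∧ ∀ b ∈ I, a * b ∈ uasSet I t ∧ b * a ∈ uasSet I t}

/-- Each term of the upper annihilating sequence of a two-sided ideal is itself a
two-sided ideal (contained in `I`). -/
lemma uas_props {R : Type*} [Ring R] (I : TwoSidedIdeal R) (t : ℕ) :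
    uasSet (I : Set R) t ⊆ (I : Set R) ∧ (0 : R) ∈ uasSet (I : Set R) t ∧
    (∀ x y, x ∈ uasSet (I : Set R) t → y ∈ uasSet (I : Set R) t →
      x + y ∈ uasSet (I : Set R) t) ∧
    (∀ x, x ∈ uasSet (I : Set R) t → -x ∈ uasSet (I : Set R) t) ∧
    (∀ r x, x ∈ uasSet (I : Set R) t → r * x ∈ uasSet (I : Set R) t) ∧
    (∀ r x, x ∈ uasSet (I : Set R) t → x * r ∈ uasSet (I : Set R) t) := by
  induction t with
  | zero =>
    refine ⟨?_, ?_, ?_, ?_, ?_, ?_⟩ <;>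
      simp +contextual [uasSet, I.zero_mem]
  | succ t ih =>
    obtain ⟨hsub, h0, hadd, hneg, hml, hmr⟩ := ih
    refine ⟨fun a ha => ha.1, ⟨I.zero_mem, fun b hb => by simpa using h0⟩, ?_, ?_, ?_, ?_⟩
    · rintro x y ⟨hxI, hx⟩ ⟨hyI, hy⟩
      refine ⟨I.add_mem hxI hyI, fun b hb => ⟨?_, ?_⟩⟩
      · rw [add_mul]; exact hadd _ _ (hx b hb).1 (hy b hb).1
      · rw [mul_add]; exact hadd _ _ (hx b hb).2 (hy b hb).2
    · rintro x ⟨hxI, hx⟩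
      refine ⟨I.neg_mem hxI, fun b hb => ⟨?_, ?_⟩⟩
      · rw [neg_mul]; exact hneg _ (hx b hb).1
      · rw [mul_neg]; exact hneg _ (hx b hb).2
    · rintro r x ⟨hxI, hx⟩
      refine ⟨I.mul_mem_left r x hxI, fun b hb => ⟨?_, ?_⟩⟩
      · rw [mul_assoc]; exact hml _ _ (hx b hb).1
      · rw [← mul_assoc]; exact (hx (b * r) (I.mul_mem_right b r hb)).2
    · rintro r x ⟨hxI, hx⟩
      refine ⟨I.mul_mem_right x r hxI, fun b hb => ⟨?_, ?_⟩⟩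
      · rw [mul_assoc]; exact (hx (r * b) (I.mul_mem_left r b hb)).1
      · rw [← mul_assoc]; exact hmr _ _ (hx b hb).2

/-- If `1 + I ⊆ Rˣ` and the upper annihilating sequence of `I` has finite length `d`,
then `Γ = 1 + I` is a nilpotent group of nilpotency class at most `d`. -/
theorem stmt18 {R : Type*} [Ring R] (I : TwoSidedIdeal R)
    (hu : ∀ a ∈ (I : Set R), IsUnit (1 + a))
    (d : ℕ) (hd : uasSet (I : Set R) d = (I : Set R))
    (hd' : uasSet (I : Set R) (d - 1) ≠ (I : Set R)) :
    ∃ Γ : Subgroup Rˣ, (∀ u : Rˣ, u ∈ Γ ↔ (u : R) - 1 ∈ (I : Set R)) ∧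
      ∃ hn : Group.IsNilpotent Γ, Group.nilpotencyClass Γ ≤ d := by
  clear hd' hu
  -- the subgroup Γ = 1 + I
  set Γ : Subgroup Rˣ :=
    { carrier := {u : Rˣ | (u : R) - 1 ∈ I}
      one_mem' := by simpa using I.zero_mem
      mul_mem' := by
        intro u v hu hv
        have : ((u * v : Rˣ) : R) - 1 =
            ((u : R) - 1) * ((v : R) - 1) + (((u : R) - 1) + ((v : R) - 1)) := by
          push_cast; noncomm_ring
        rw [Set.mem_setOf_eq, this]
        exact I.add_mem (I.mul_mem_right _ _ hu) (I.add_mem hu hv)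
      inv_mem' := by
        intro u hu
        have : ((u⁻¹ : Rˣ) : R) - 1 = -((u⁻¹ : Rˣ) * ((u : R) - 1)) := by
          rw [mul_sub, Units.inv_mul, mul_one, neg_sub]
        rw [Set.mem_setOf_eq, this]
        exact I.neg_mem (I.mul_mem_left _ _ hu) } with hΓ
  have hmemΓ : ∀ u : Rˣ, u ∈ Γ ↔ (u : R) - 1 ∈ (I : Set R) := fun u => Iff.rfl
  refine ⟨Γ, hmemΓ, ?_⟩
  -- the ascending central series
  have P := fun t => uas_props I t
  set H : ℕ → Subgroup Γ := fun t =>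
    { carrier := {u : Γ | ((u : Rˣ) : R) - 1 ∈ uasSet (I : Set R) t}
      one_mem' := by simpa using (P t).2.1
      mul_mem' := by
        intro u v hu hv
        have : (((u * v : Γ) : Rˣ) : R) - 1 =
            (((u : Rˣ) : R) - 1) * (((v : Rˣ) : R) - 1) +
              ((((u : Rˣ) : R) - 1) + (((v : Rˣ) : R) - 1)) := by
          push_cast; noncomm_ring
        rw [Set.mem_setOf_eq, this]
        exact (P t).2.2.1 _ _ ((P t).2.2.2.2.2 _ _ hu) ((P t).2.2.1 _ _ hu hv)
      inv_mem' := by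
        intro u hu
        have : (((u⁻¹ : Γ) : Rˣ) : R) - 1 =
            -((((u : Rˣ)⁻¹ : Rˣ) : R) * (((u : Rˣ) : R) - 1)) := by
          rw [mul_sub]
          push_cast
          rw [Units.inv_mul]; noncomm_ring
        rw [Set.mem_setOf_eq, this]
        exact (P t).2.2.2.1 _ ((P t).2.2.2.2.1 _ _ hu) } with hH
  have hasc : IsAscendingCentralSeries H := by
    constructor
    · ext u
      simp only [hH, Subgroup.mem_mk, Set.mem_setOf_eq, Subgroup.mem_bot]
      constructor
      · intro h
        have h1 : ((u : Rˣ) : R) = 1 := by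
          have := h
          simp only [uasSet, Set.mem_singleton_iff, sub_eq_zero] at this
          exact this
        have : (u : Rˣ) = 1 := Units.ext h1
        exact Subtype.ext this
      · rintro rfl; simpa [uasSet] using rfl
    · intro x n hx g
      simp only [hH, Subgroup.mem_mk, Set.mem_setOf_eq] at hx ⊢
      set a : R := ((x : Rˣ) : R) - 1 with ha
      set b : R := ((g : Rˣ) : R) - 1 with hb
      have hbI : b ∈ (I : Set R) := g.2
      have hab : a * b - b * a ∈ uasSet (I : Set R) n := by
        have h1 := (hx.2 b hbI).1
        have h2 := (hx.2 b hbI).2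
        rw [sub_eq_add_neg]
        exact (P n).2.2.1 _ _ h1 ((P n).2.2.2.1 _ h2)
      have key : (((x * g * x⁻¹ * g⁻¹ : Γ) : Rˣ) : R) - 1 =
          (a * b - b * a) * (((x : Rˣ)⁻¹ : Rˣ) : R) * (((g : Rˣ)⁻¹ : Rˣ) : R) := by
        have hxx : ((x : Rˣ) : R) * (((x : Rˣ)⁻¹ : Rˣ) : R) = 1 := by
          rw [← Units.val_mul, mul_inv_cancel, Units.val_one]
        have hgg : ((g : Rˣ) : R) * (((g : Rˣ)⁻¹ : Rˣ) : R) = 1 := by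
          rw [← Units.val_mul, mul_inv_cancel, Units.val_one]
        push_cast
        have : a * b - b * a = ((x : Rˣ) : R) * ((g : Rˣ) : R) -
            ((g : Rˣ) : R) * ((x : Rˣ) : R) := by rw [ha, hb]; noncomm_ring
        rw [this]
        calc ((x : Rˣ) : R) * ((g : Rˣ) : R) * (((x : Rˣ)⁻¹ : Rˣ) : R) *
              (((g : Rˣ)⁻¹ : Rˣ) : R) - 1
            = ((x : Rˣ) : R) * ((g : Rˣ) : R) * (((x : Rˣ)⁻¹ : Rˣ) : R) *
              (((g : Rˣ)⁻¹ : Rˣ) : R) -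
              ((g : Rˣ) : R) * (((x : Rˣ) : R) * (((x : Rˣ)⁻¹ : Rˣ) : R)) *
              (((g : Rˣ)⁻¹ : Rˣ) : R) := by
              rw [hxx, mul_one, hgg]
          _ = _ := by noncomm_ring
      show (((x * g * x⁻¹ * g⁻¹ : Γ) : Rˣ) : R) - 1 ∈ uasSet (I : Set R) n
      rw [key]
      exact (P n).2.2.2.2.2 _ _ ((P n).2.2.2.2.2 _ _ hab)
  have htop : H d = ⊤ := by
    ext u
    simp only [hH, Subgroup.mem_mk, Set.mem_setOf_eq, Subgroup.mem_top, iff_true]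
    show ((u : Rˣ) : R) - 1 ∈ uasSet (I : Set R) d
    rw [hd]
    exact u.2
  have hucs : upperCentralSeries Γ d = ⊤ :=
    top_le_iff.mp (htop ▸ ascending_central_series_le_upper H hasc d)
  haveI hn : Group.IsNilpotent Γ := ⟨⟨d, hucs⟩⟩
  exact ⟨hn, upperCentralSeries_eq_top_iff_nilpotencyClass_le.mp hucs⟩
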